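/- Let Z_∞ := π_∞(0) and let γ = [[a,b],[c,d]] ∈ GL₂(ℚ). Then in Ξ₀: if c ≠ 0, [Z_∞, γ⁻¹·Z_∞] = [π_∞(0), π_{−d/c}(∞)] − γ⁻¹·[π_∞(0), π_∞(a/c)]; and if c = 0, [Z_∞, γ⁻¹·Z_∞] = [π_∞(0), π_∞(−b/a)]. -/

import Mathlib

noncomputable section

open scoped MatrixGroups

/-- The projective line over `ℚ`, i.e. `P¹(ℚ)`. -/
abbrev P1 : Type := Projectivization ℚ (Fin 2 → ℚ)

namespace PaperMS

/-- The linear automorphism of `ℚ²` attached to `γ ∈ GL₂(ℚ)`. -/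
def glEquiv (γ : GL (Fin 2) ℚ) : (Fin 2 → ℚ) ≃ₗ[ℚ] (Fin 2 → ℚ) :=
  LinearMap.GeneralLinearGroup.generalLinearEquiv ℚ (Fin 2 → ℚ)
    (Matrix.GeneralLinearGroup.toLin γ)

lemma glEquiv_one : glEquiv 1 = LinearEquiv.refl ℚ (Fin 2 → ℚ) := by
  simp only [glEquiv, map_one]
  rfl

lemma glEquiv_mul (γ δ : GL (Fin 2) ℚ) :
    glEquiv (γ * δ) = (glEquiv δ).trans (glEquiv γ) := by
  simp only [glEquiv, map_mul]
  rfl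

/-- The Möbius action of `GL₂(ℚ)` on `P¹(ℚ)`. -/
instance : MulAction (GL (Fin 2) ℚ) P1 where
  smul γ := Projectivization.map (glEquiv γ).toLinearMap (glEquiv γ).injective
  one_smul x := by
    induction x using Projectivization.ind with
    | h v hv =>
      show Projectivization.map _ _ _ = _
      rw [Projectivization.map_mk]
      simp [glEquiv_one]
  mul_smul γ δ x := by
    induction x using Projectivization.ind with
    | h v hv =>
      show Projectivization.map _ _ _ =
        Projectivization.map _ _ (Projectivization.map _ _ _)
      rw [Projectivization.map_mk, Projectivization.map_mk, Projectivization.map_mk]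
      simp [glEquiv_mul]

lemma smul_P1_def (γ : GL (Fin 2) ℚ) (x : P1) :
    γ • x = Projectivization.map (glEquiv γ).toLinearMap (glEquiv γ).injective x := rfl

/-- The point of `P¹(ℚ)` attached to a rational number. -/
def ptQ (x : ℚ) : P1 :=
  Projectivization.mk ℚ ![x, 1] (by
    intro h
    have := congrFun h 1
    simp at this)

/-- The point `∞` of `P¹(ℚ)`. -/
def ptInf : P1 :=
  Projectivization.mk ℚ ![1, 0] (by
    intro h
    have := congrFun h 0
    simp at this)

lemma ptQ_ne_ptInf (x : ℚ) : ptQ x ≠ ptInf := by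
  intro h
  rw [ptQ, ptInf, Projectivization.mk_eq_mk_iff] at h
  obtain ⟨a, ha⟩ := h
  have := congrFun ha 1
  simp at this

/-- The set `𝒫(ℚ)` of infinitesimal cusps `π_r(s)`: ordered pairs of distinct
points of `P¹(ℚ)`; the symbol `π_r(s)` corresponds to the pair `(r, s)`. -/
def PP : Type := {p : P1 × P1 // p.1 ≠ p.2}

/-- The infinitesimal cusp `π_r(s)`. -/
def pi' (r s : P1) (h : r ≠ s) : PP := ⟨(r, s), h⟩

instance : MulAction (GL (Fin 2) ℚ) PP where
  smul γ p := ⟨(γ • p.val.1, γ • p.val.2), fun h => p.prop (MulAction.injective γ h)⟩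
  one_smul p := by
    apply Subtype.ext
    show (((1 : GL (Fin 2) ℚ) • p.val.1, (1 : GL (Fin 2) ℚ) • p.val.2) : P1 × P1) = p.val
    simp
  mul_smul γ δ p := by
    apply Subtype.ext
    show ((((γ * δ) : GL (Fin 2) ℚ) • p.val.1, ((γ * δ) : GL (Fin 2) ℚ) • p.val.2) : P1 × P1) = _
    simp [mul_smul]
    rfl

/-- `Ξ`, the group of divisors on `𝒫(ℚ)`. -/
abbrev Xi : Type := PP →₀ ℤ

/-- `Δ`, the group of divisors on `P¹(ℚ)`. -/
abbrev Delta : Type := P1 →₀ ℤ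

/-- `GL₂(ℚ)` acts on divisors on `𝒫(ℚ)`. -/
instance : MulAction (GL (Fin 2) ℚ) Xi where
  smul γ v := Finsupp.mapDomain (γ • ·) v
  one_smul v := by
    show Finsupp.mapDomain _ _ = _
    simp only [one_smul]
    exact Finsupp.mapDomain_id
  mul_smul γ δ v := by
    show Finsupp.mapDomain _ _ = Finsupp.mapDomain _ (Finsupp.mapDomain _ _)
    rw [← Finsupp.mapDomain_comp]
    congr 1
    funext x
    simp [mul_smul]

/-- `GL₂(ℚ)` acts on divisors on `P¹(ℚ)`. -/
instance : MulAction (GL (Fin 2) ℚ) Delta where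
  smul γ v := Finsupp.mapDomain (γ • ·) v
  one_smul v := by
    show Finsupp.mapDomain _ _ = _
    simp only [one_smul]
    exact Finsupp.mapDomain_id
  mul_smul γ δ v := by
    show Finsupp.mapDomain _ _ = Finsupp.mapDomain _ (Finsupp.mapDomain _ _)
    rw [← Finsupp.mapDomain_comp]
    congr 1
    funext x
    simp [mul_smul]

/-- The degree of a divisor on `𝒫(ℚ)`. -/
def degXi : Xi →+ ℤ := Finsupp.liftAddHom fun _ => AddMonoidHom.id ℤ

/-- The degree of a divisor on `P¹(ℚ)`. -/
def degDelta : Delta →+ ℤ := Finsupp.liftAddHom fun _ => AddMonoidHom.id ℤ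

/-- `Ξ₀`, the subgroup of degree-zero divisors on `𝒫(ℚ)`. -/
def Xi0 : AddSubgroup Xi := degXi.ker

/-- `Δ₀`, the subgroup of degree-zero divisors on `P¹(ℚ)`. -/
def Delta0 : AddSubgroup Delta := degDelta.ker

/-- The divisor attached to a point of `𝒫(ℚ)`. -/
def dv (p : PP) : Xi := Finsupp.single p 1

/-- The divisor attached to a point of `P¹(ℚ)`. -/
def dvP (r : P1) : Delta := Finsupp.single r 1

/-- `[c₁, c₂] = {c₂} - {c₁} ∈ Ξ₀`. -/
def br (c₁ c₂ : PP) : Xi := dv c₂ - dv c₁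

/-- The modular symbol `{r, s} = [π_r(s), π_s(r)]`. -/
def msym (r s : P1) (h : r ≠ s) : Xi := br (pi' r s h) (pi' s r h.symm)

/-- The infinitesimal symbol `[s, t]_r = [π_r(s), π_r(t)]`. -/
def isym (r s t : P1) (hs : s ≠ r) (ht : t ≠ r) : Xi :=
  br (pi' r s hs.symm) (pi' r t ht.symm)

lemma degXi_single (p : PP) (n : ℤ) : degXi (Finsupp.single p n) = n := by
  simp [degXi]

lemma degDelta_single (r : P1) (n : ℤ) : degDelta (Finsupp.single r n) = n := by
  simp [degDelta]

lemma br_mem_Xi0 (c₁ c₂ : PP) : br c₁ c₂ ∈ Xi0 := by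
  simp [br, Xi0, AddMonoidHom.mem_ker, dv, degXi_single]

lemma smul_mem_Xi0 (γ : GL (Fin 2) ℚ) {v : Xi} (hv : v ∈ Xi0) : γ • v ∈ Xi0 := by
  have h : degXi (γ • v) = degXi v := by
    show degXi (Finsupp.mapDomain (γ • ·) v) = degXi v
    simp only [degXi, Finsupp.liftAddHom_apply]
    exact Finsupp.sum_mapDomain_index (fun _ => rfl) (fun _ _ _ => rfl)
  simpa [Xi0, AddMonoidHom.mem_ker, h] using hv

lemma smul_mem_Delta0 (γ : GL (Fin 2) ℚ) {v : Delta} (hv : v ∈ Delta0) : γ • v ∈ Delta0 := by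
  have h : degDelta (γ • v) = degDelta v := by
    show degDelta (Finsupp.mapDomain (γ • ·) v) = degDelta v
    simp only [degDelta, Finsupp.liftAddHom_apply]
    exact Finsupp.sum_mapDomain_index (fun _ => rfl) (fun _ _ _ => rfl)
  simpa [Delta0, AddMonoidHom.mem_ker, h] using hv

lemma brP_mem_Delta0 (r s : P1) : dvP s - dvP r ∈ Delta0 := by
  simp [Delta0, AddMonoidHom.mem_ker, dvP, degDelta_single]

/-- The boundary map `∂ : Ξ → Δ`, induced by `π_r(s) ↦ r`. -/
def bdry : Xi →+ Delta := Finsupp.mapDomain.addMonoidHom fun p : PP => p.val.1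

/-- The embedding of `SL₂(ℤ)` in `GL₂(ℚ)`. -/
def toGLQ : SL(2, ℤ) →* GL (Fin 2) ℚ :=
  Matrix.SpecialLinearGroup.toGL.comp (Matrix.SpecialLinearGroup.map (Int.castRingHom ℚ))

end PaperMS

namespace PaperMS

/-- The base infinitesimal cusp `Z_∞ = π_∞(0)`. -/
def Zinf : PP := pi' ptInf (ptQ 0) (ptQ_ne_ptInf 0).symm

lemma smul_mk' (γ : GL (Fin 2) ℚ) (v : Fin 2 → ℚ) (hv : v ≠ 0)
    (hw : (γ : Matrix (Fin 2) (Fin 2) ℚ).mulVec v ≠ 0) :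
    γ • Projectivization.mk ℚ v hv = Projectivization.mk ℚ ((γ : Matrix (Fin 2) (Fin 2) ℚ).mulVec v) hw := by
  rw [smul_P1_def, Projectivization.map_mk]; rfl

lemma ptQ_eq_mk (x y : ℚ) (hy : y ≠ 0) (h : ¬ (![x,y] = 0)) :
    Projectivization.mk ℚ ![x, y] h = ptQ (x / y) := by
  rw [ptQ, Projectivization.mk_eq_mk_iff]
  refine ⟨Units.mk0 y hy, ?_⟩
  funext i; fin_cases i <;> simp [Units.smul_def] <;> field_simp

lemma ptInf_eq_mk (x : ℚ) (hx : x ≠ 0) (h : ¬ (![x,(0:ℚ)] = 0)) :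
    Projectivization.mk ℚ ![x, 0] h = ptInf := by
  rw [ptInf, Projectivization.mk_eq_mk_iff]
  refine ⟨Units.mk0 x hx, ?_⟩
  funext i; fin_cases i <;> simp [Units.smul_def]

lemma mulVec_two (a b c d x y : ℚ) :
    Matrix.mulVec !![a,b;c,d] ![x,y] = ![a*x+b*y, c*x+d*y] := by
  funext i; fin_cases i <;> simp [Matrix.mulVec, dotProduct, Fin.sum_univ_two]

lemma smul_dv (γ : GL (Fin 2) ℚ) (p : PP) : γ • dv p = dv (γ • p) := by
  show Finsupp.mapDomain _ _ = _
  simp [dv, Finsupp.mapDomain_single]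

lemma smul_sub_Xi (γ : GL (Fin 2) ℚ) (u v : Xi) : γ • (u - v) = γ • u - γ • v := by
  show Finsupp.mapDomain _ _ = Finsupp.mapDomain _ _ - Finsupp.mapDomain _ _
  exact (Finsupp.mapDomain.addMonoidHom _).map_sub u v

lemma smul_br (γ : GL (Fin 2) ℚ) (c₁ c₂ : PP) : γ • br c₁ c₂ = br (γ • c₁) (γ • c₂) := by
  rw [br, smul_sub_Xi, smul_dv, smul_dv, br]

lemma smul_pi' (γ : GL (Fin 2) ℚ) (r s : P1) (h : r ≠ s) :
    γ • pi' r s h = pi' (γ • r) (γ • s) (fun hh => h (MulAction.injective γ hh)) := rfl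

lemma mk_congr {v w : Fin 2 → ℚ} (h : v = w) (hv : v ≠ 0) :
    Projectivization.mk ℚ v hv = Projectivization.mk ℚ w (h ▸ hv) := by subst h; rfl

/-- Let `Z_∞ := π_∞(0)` and `γ = [[a,b],[c,d]] ∈ GL₂(ℚ)`.  Then in `Ξ₀`:
if `c ≠ 0`, `[Z_∞, γ⁻¹·Z_∞] = [π_∞(0), π_{-d/c}(∞)] - γ⁻¹·[π_∞(0), π_∞(a/c)]`;
and if `c = 0`, `[Z_∞, γ⁻¹·Z_∞] = [π_∞(0), π_∞(-b/a)]`. -/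
theorem statement4 (γ : GL (Fin 2) ℚ) (a b c d : ℚ)
    (hγ : (γ : Matrix (Fin 2) (Fin 2) ℚ) = !![a, b; c, d]) :
    (c ≠ 0 →
      br Zinf (γ⁻¹ • Zinf) =
        br Zinf (pi' (ptQ (-d / c)) ptInf (ptQ_ne_ptInf _)) -
          γ⁻¹ • br Zinf (pi' ptInf (ptQ (a / c)) (ptQ_ne_ptInf _).symm)) ∧
    (c = 0 →
      br Zinf (γ⁻¹ • Zinf) =
        br Zinf (pi' ptInf (ptQ (-b / a)) (ptQ_ne_ptInf _).symm)) := by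
  have hdet : a * d - b * c ≠ 0 := by
    have h1 : IsUnit (γ : Matrix (Fin 2) (Fin 2) ℚ).det :=
      (Matrix.isUnit_iff_isUnit_det _).mp γ.isUnit
    rw [hγ, Matrix.det_fin_two_of] at h1
    exact h1.ne_zero
  constructor
  · intro hc
    have hm1 : (γ : Matrix (Fin 2) (Fin 2) ℚ).mulVec ![-d/c, 1] = ![(b*c - a*d)/c, 0] := by
      rw [hγ, mulVec_two]
      funext i; fin_cases i <;> field_simp <;> ring
    have hq : (b*c - a*d)/c ≠ 0 := by
      intro h; rw [div_eq_zero_iff] at h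
      rcases h with h | h
      · exact hdet (by linarith)
      · exact hc h
    have hne1 : (γ : Matrix (Fin 2) (Fin 2) ℚ).mulVec ![-d/c, 1] ≠ 0 := by
      rw [hm1]; intro h; exact hq (congrFun h 0)
    have h1 : γ • ptQ (-d / c) = ptInf := by
      rw [ptQ, smul_mk' γ _ _ hne1, mk_congr hm1]
      exact ptInf_eq_mk _ hq _
    have hm2 : (γ : Matrix (Fin 2) (Fin 2) ℚ).mulVec ![1, 0] = ![a, c] := by
      rw [hγ, mulVec_two]; funext i; fin_cases i <;> simp
    have hne2 : (γ : Matrix (Fin 2) (Fin 2) ℚ).mulVec ![1, 0] ≠ 0 := by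
      rw [hm2]; intro h; exact hc (congrFun h 1)
    have h2 : γ • ptInf = ptQ (a / c) := by
      rw [ptInf, smul_mk' γ _ _ hne2, mk_congr hm2]
      exact ptQ_eq_mk a c hc _
    have hinv1 : γ⁻¹ • ptInf = ptQ (-d / c) := by rw [← h1, inv_smul_smul]
    have hinv2 : γ⁻¹ • ptQ (a / c) = ptInf := by rw [← h2, inv_smul_smul]
    have hPP : γ⁻¹ • pi' ptInf (ptQ (a / c)) (ptQ_ne_ptInf _).symm =
        pi' (ptQ (-d / c)) ptInf (ptQ_ne_ptInf _) := by
      rw [smul_pi']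
      apply Subtype.ext
      simp only [pi', hinv1, hinv2]
    rw [smul_br, hPP]
    simp only [br]
    abel
  · intro hc
    subst hc
    have ha : a ≠ 0 := fun h => hdet (by rw [h]; ring)
    have hd : d ≠ 0 := fun h => hdet (by rw [h]; ring)
    have hm1 : (γ : Matrix (Fin 2) (Fin 2) ℚ).mulVec ![1, 0] = ![a, 0] := by
      rw [hγ, mulVec_two]; funext i; fin_cases i <;> simp
    have hne1 : (γ : Matrix (Fin 2) (Fin 2) ℚ).mulVec ![1, 0] ≠ 0 := by
      rw [hm1]; intro h; exact ha (congrFun h 0)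
    have h1 : γ • ptInf = ptInf := by
      rw [ptInf, smul_mk' γ _ _ hne1, mk_congr hm1]
      exact ptInf_eq_mk _ ha _
    have hm2 : (γ : Matrix (Fin 2) (Fin 2) ℚ).mulVec ![-b/a, 1] = ![0, d] := by
      rw [hγ, mulVec_two]; funext i; fin_cases i <;> simp <;> field_simp <;> ring
    have hne2 : (γ : Matrix (Fin 2) (Fin 2) ℚ).mulVec ![-b/a, 1] ≠ 0 := by
      rw [hm2]; intro h; exact hd (congrFun h 1)
    have h2 : γ • ptQ (-b / a) = ptQ 0 := by
      rw [ptQ, smul_mk' γ _ _ hne2, mk_congr hm2]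
      rw [ptQ_eq_mk 0 d hd, zero_div]
    have hinv1 : γ⁻¹ • ptInf = ptInf := by rw [inv_smul_eq_iff]; exact h1.symm
    have hinv2 : γ⁻¹ • ptQ 0 = ptQ (-b / a) := by rw [← h2, inv_smul_smul]
    have hPP : γ⁻¹ • Zinf = pi' ptInf (ptQ (-b / a)) (ptQ_ne_ptInf _).symm := by
      rw [Zinf, smul_pi']
      apply Subtype.ext
      simp only [pi', hinv1, hinv2]
    rw [hPP]

end PaperMS
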